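/- Every sequence ρ^{(n)} of fractional q-partitions of [0,1] contains a subsequence converging to some fractional q-partition ρ over rational intervals, meaning ∫_D ρ_i^{(n)} → ∫_D ρ_i for every interval D ⊆ [0,1] with rational endpoints and every i ∈ [q]. -/

import Mathlib

open MeasureTheory Filter

section Aux
open Set
open scoped ENNReal


lemma aux_isFiniteMeasure_sum {ι : Type*} {α : Type*} [MeasurableSpace α]
    (s : Finset ι) (μ : ι → Measure α) [∀ i, IsFiniteMeasure (μ i)] :
    IsFiniteMeasure (∑ i ∈ s, μ i) := by
  constructor
  rw [Measure.finset_sum_apply]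
  exact ENNReal.sum_lt_top.2 fun i _ => measure_lt_top _ _

lemma aux_rnDeriv_sum {ι : Type*} {α : Type*} [MeasurableSpace α]
    (s : Finset ι) (μ : ι → Measure α) (ν : Measure α) [SigmaFinite ν]
    [∀ i, IsFiniteMeasure (μ i)] :
    (∑ i ∈ s, μ i).rnDeriv ν =ᵐ[ν] fun x => ∑ i ∈ s, (μ i).rnDeriv ν x := by
  classical
  induction s using Finset.induction_on with
  | empty => simp only [Finset.sum_empty]; exact Measure.rnDeriv_zero ν
  | insert a s hnotmem ih =>
    haveI := aux_isFiniteMeasure_sum s μ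
    rw [Finset.sum_insert hnotmem]
    refine (Measure.rnDeriv_add' _ _ _).trans ?_
    filter_upwards [ih] with x hx
    simp [Finset.sum_insert hnotmem, hx]

section Fpart
noncomputable def auxF (f : ℝ → ℝ) (x : ℝ) : ℝ := ∫ t in Icc (0:ℝ) 1 ∩ Iic x, f t

variable {f : ℝ → ℝ} (hm : Measurable f) (hb : ∀ x, f x ∈ Icc (0:ℝ) 1)
include hm hb

lemma aux_integrableOn (s : Set ℝ) (hs : volume s ≠ ⊤) : IntegrableOn f s := by
  refine Integrable.mono' (g := fun _ => (1:ℝ))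
    (integrableOn_const (C := (1:ℝ)) hs) hm.aestronglyMeasurable.restrict ?_
  filter_upwards with x
  rw [Real.norm_eq_abs, abs_of_nonneg (hb x).1]
  exact (hb x).2

omit hm hb in
lemma aux_vol_ne_top (x : ℝ) : volume (Icc (0:ℝ) 1 ∩ Iic x) ≠ ⊤ :=
  ((measure_mono inter_subset_left).trans_lt (by simp [Real.volume_Icc])).ne

omit hm in
lemma auxF_nonneg (x : ℝ) : 0 ≤ auxF f x :=
  setIntegral_nonneg (measurableSet_Icc.inter measurableSet_Iic) fun t _ => (hb t).1

lemma aux_setIntegral_le (s : Set ℝ) (hs : MeasurableSet s) (hvol : volume s ≠ ⊤) :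
    ∫ t in s, f t ≤ (volume s).toReal := by
  have : ∫ t in s, f t ≤ ∫ t in s, (1:ℝ) := by
    exact setIntegral_mono_on (aux_integrableOn hm hb s hvol)
      (integrableOn_const (C := (1:ℝ)) hvol) hs fun t _ => (hb t).2
  simpa [measureReal_def] using this

lemma auxF_le_one (x : ℝ) : auxF f x ≤ 1 := by
  refine (aux_setIntegral_le hm hb _ (measurableSet_Icc.inter measurableSet_Iic)
    (aux_vol_ne_top x)).trans ?_
  have : volume (Icc (0:ℝ) 1 ∩ Iic x) ≤ 1 := by
    refine (measure_mono inter_subset_left).trans ?_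
    simp [Real.volume_Icc]
  exact ENNReal.toReal_le_of_le_ofReal zero_le_one (by simpa using this)

lemma auxF_split {x y : ℝ} (hxy : x ≤ y) :
    auxF f y = auxF f x + ∫ t in Icc (0:ℝ) 1 ∩ Ioc x y, f t := by
  rw [auxF, auxF, ← setIntegral_union]
  · rw [← inter_union_distrib_left, Iic_union_Ioc_eq_Iic hxy]
  · exact (Set.disjoint_left.2 fun t (ht : t ∈ Iic x) (ht' : t ∈ Ioc x y) =>
      ht'.1.not_ge ht).mono inter_subset_right inter_subset_right
  · exact measurableSet_Icc.inter measurableSet_Ioc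
  · exact aux_integrableOn hm hb _ (aux_vol_ne_top x)
  · exact aux_integrableOn hm hb _
      (((measure_mono inter_subset_left).trans_lt (by simp [Real.volume_Icc])).ne)

lemma auxF_mono : Monotone (auxF f) := by
  intro x y hxy
  rw [auxF_split hm hb hxy]
  have : 0 ≤ ∫ t in Icc (0:ℝ) 1 ∩ Ioc x y, f t :=
    setIntegral_nonneg (measurableSet_Icc.inter measurableSet_Ioc) fun t _ => (hb t).1
  linarith

lemma auxF_lip {x y : ℝ} (hxy : x ≤ y) : auxF f y - auxF f x ≤ y - x := by
  rw [auxF_split hm hb hxy]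
  have h1 : ∫ t in Icc (0:ℝ) 1 ∩ Ioc x y, f t ≤ (volume (Icc (0:ℝ) 1 ∩ Ioc x y)).toReal :=
    aux_setIntegral_le hm hb _ (measurableSet_Icc.inter measurableSet_Ioc)
      (((measure_mono inter_subset_right).trans_lt (by simp)).ne)
  have h2 : (volume (Icc (0:ℝ) 1 ∩ Ioc x y)).toReal ≤ y - x := by
    have : volume (Icc (0:ℝ) 1 ∩ Ioc x y) ≤ ENNReal.ofReal (y - x) := by
      rw [← Real.volume_Ioc]
      exact measure_mono inter_subset_right
    calc (volume (Icc (0:ℝ) 1 ∩ Ioc x y)).toReal ≤ (ENNReal.ofReal (y - x)).toReal :=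
          ENNReal.toReal_mono (by simp) this
      _ = y - x := ENNReal.toReal_ofReal (by linarith)
  linarith

omit hm hb in
lemma auxF_nonpos {x : ℝ} (hx : x ≤ 0) : auxF f x = 0 := by
  have : volume (Icc (0:ℝ) 1 ∩ Iic x) = 0 := by
    refine measure_mono_null (fun t ht => ?_) (Real.volume_singleton (a := (0:ℝ)))
    exact le_antisymm (ht.2.trans hx) ht.1.1
  rw [auxF, Measure.restrict_eq_zero.2 this, integral_zero_measure]

omit hm hb in
lemma auxF_ge_one {x : ℝ} (hx : 1 ≤ x) : auxF f x = auxF f 1 := by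
  rw [auxF, auxF]
  congr 1
  rw [inter_eq_self_of_subset_left (fun t ht => ht.2.trans hx),
    inter_eq_self_of_subset_left (fun t ht => ht.2)]

lemma auxF_interval {a b : ℝ} (ha : 0 ≤ a) (hab : a ≤ b) (hb1 : b ≤ 1) :
    ∫ t in Icc a b, f t = auxF f b - auxF f a := by
  rw [auxF_split hm hb hab]
  have : Icc (0:ℝ) 1 ∩ Ioc a b = Ioc a b :=
    inter_eq_self_of_subset_right fun t ht => ⟨ha.trans ht.1.le, ht.2.trans hb1⟩
  rw [this, MeasureTheory.integral_Icc_eq_integral_Ioc]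
  ring

end Fpart

section gext
variable (G : ℚ → ℝ)

noncomputable def auxg (x : ℝ) : ℝ := ⨅ r : {q : ℚ // x < (q:ℝ)}, G r

variable {G}
variable (hG0 : ∀ r, 0 ≤ G r) (hGm : Monotone G)
  (hGl : ∀ r s : ℚ, r ≤ s → G s - G r ≤ (s:ℝ) - (r:ℝ))

instance auxg_nonempty (x : ℝ) : Nonempty {q : ℚ // x < (q:ℝ)} := by
  obtain ⟨r, hr⟩ := exists_rat_gt x
  exact ⟨⟨r, hr⟩⟩

include hG0 in
lemma auxg_bddBelow (x : ℝ) : BddBelow (Set.range fun r : {q : ℚ // x < (q:ℝ)} => G r) :=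
  ⟨0, by rintro y ⟨r, rfl⟩; exact hG0 r⟩

include hG0 in
lemma auxg_nonneg (x : ℝ) : 0 ≤ auxg G x :=
  le_ciInf fun r => hG0 r

include hG0 in
lemma auxg_le (x : ℝ) {s : ℚ} (hs : x < (s:ℝ)) : auxg G x ≤ G s :=
  ciInf_le (auxg_bddBelow hG0 x) ⟨s, hs⟩

include hGm hGl in
lemma auxg_ge (x : ℝ) {s : ℚ} (hs : x < (s:ℝ)) : G s - ((s:ℝ) - x) ≤ auxg G x := by
  refine le_ciInf fun ⟨r, hr⟩ => ?_
  rcases le_total r s with hrs | hrs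
  · have := hGl r s hrs
    have : G s - ((s:ℝ) - (r:ℝ)) ≤ G r := by linarith
    refine le_trans ?_ this
    have : x ≤ (r:ℝ) := hr.le
    linarith
  · have := hGm hrs
    have hx : x < (s:ℝ) := hs
    simp only []
    nlinarith [hGm hrs]

include hG0 in
lemma auxg_mono : Monotone (auxg G) := by
  intro x y hxy
  exact le_ciInf fun ⟨r, hr⟩ => auxg_le hG0 x (lt_of_le_of_lt hxy hr)

include hG0 hGm hGl in
lemma auxg_lip_le {x y : ℝ} (hxy : x ≤ y) : auxg G y - auxg G x ≤ y - x := by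
  have key : auxg G y ≤ (auxg G x + (y - x)) := by
    refine le_of_forall_pos_le_add fun ε hε => ?_
    obtain ⟨s, hs1, hs2⟩ := exists_rat_btwn (show y < y + ε by linarith)
    have h1 : auxg G y ≤ G s := auxg_le hG0 y hs1
    have h2 : G s - ((s:ℝ) - x) ≤ auxg G x := auxg_ge hGm hGl x (lt_of_le_of_lt hxy hs1)
    have : (s:ℝ) ≤ y + ε := hs2.le
    linarith
  linarith

include hG0 hGm hGl in
lemma auxg_rat (p : ℚ) : auxg G (p:ℝ) = G p := by
  refine le_antisymm ?_ (le_ciInf fun ⟨r, hr⟩ => hGm (by exact_mod_cast hr.le))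
  refine le_of_forall_pos_le_add fun ε hε => ?_
  obtain ⟨s, hs1, hs2⟩ := exists_rat_btwn (show (p:ℝ) < p + ε by linarith)
  have hps : p ≤ s := by exact_mod_cast hs1.le
  have h1 := hGl p s hps
  have h2 := auxg_le hG0 (p:ℝ) hs1
  have : (s:ℝ) ≤ (p:ℝ) + ε := hs2.le
  linarith

lemma auxg_lipschitz (hG0 : ∀ r, 0 ≤ G r) (hGm : Monotone G)
    (hGl : ∀ r s : ℚ, r ≤ s → G s - G r ≤ (s:ℝ) - (r:ℝ)) : LipschitzWith 1 (auxg G) := by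
  have key : ∀ x y, x ≤ y → |auxg G y - auxg G x| ≤ |y - x| := by
    intro x y hxy
    rw [abs_of_nonneg (sub_nonneg.2 (auxg_mono hG0 hxy)), abs_of_nonneg (sub_nonneg.2 hxy)]
    exact auxg_lip_le hG0 hGm hGl hxy
  rw [lipschitzWith_iff_dist_le_mul]
  intro x y
  rw [NNReal.coe_one, one_mul, Real.dist_eq, Real.dist_eq]
  rcases le_total x y with hle | hle
  · rw [abs_sub_comm (auxg G x), abs_sub_comm x]
    exact key x y hle
  · exact key y x hle

noncomputable def auxSt (hG0 : ∀ r, 0 ≤ G r) (hGm : Monotone G)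
    (hGl : ∀ r s : ℚ, r ≤ s → G s - G r ≤ (s:ℝ) - (r:ℝ)) : StieltjesFunction ℝ where
  toFun := auxg G
  mono' := auxg_mono hG0
  right_continuous' := fun x =>
    ((auxg_lipschitz hG0 hGm hGl).continuous.tendsto x).mono_left nhdsWithin_le_nhds

noncomputable def auxStC (hG0 : ∀ r, 0 ≤ G r) (hGm : Monotone G)
    (hGl : ∀ r s : ℚ, r ≤ s → G s - G r ≤ (s:ℝ) - (r:ℝ)) : StieltjesFunction ℝ where
  toFun := fun x => x - auxg G x
  mono' := fun x y hxy => by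
    have := auxg_lip_le hG0 hGm hGl hxy
    simp only []
    linarith
  right_continuous' := fun x =>
    ((continuous_id.sub (auxg_lipschitz hG0 hGm hGl).continuous).tendsto x).mono_left
      nhdsWithin_le_nhds

variable (hG0 : ∀ r, 0 ≤ G r) (hGm : Monotone G)
  (hGl : ∀ r s : ℚ, r ≤ s → G s - G r ≤ (s:ℝ) - (r:ℝ))

include hG0 hGm hGl in
lemma auxg_leftLim (x : ℝ) : Function.leftLim (auxg G) x = auxg G x :=
  leftLim_eq_of_tendsto
    (((auxg_lipschitz hG0 hGm hGl).continuous.tendsto x).mono_left nhdsWithin_le_nhds)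

lemma auxSt_measure_Ioc (a b : ℚ) :
    (auxSt hG0 hGm hGl).measure (Set.Ioc (a:ℝ) (b:ℝ)) = ENNReal.ofReal (G b - G a) := by
  rw [StieltjesFunction.measure_Ioc]
  show ENNReal.ofReal (auxg G (b:ℝ) - auxg G (a:ℝ)) = _
  rw [auxg_rat hG0 hGm hGl, auxg_rat hG0 hGm hGl]

lemma auxSt_measure_Ioo (a b : ℚ) :
    (auxSt hG0 hGm hGl).measure (Set.Ioo (a:ℝ) (b:ℝ)) = ENNReal.ofReal (G b - G a) := by
  rw [StieltjesFunction.measure_Ioo]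
  show ENNReal.ofReal (Function.leftLim (auxg G) (b:ℝ) - auxg G (a:ℝ)) = _
  rw [auxg_leftLim hG0 hGm hGl, auxg_rat hG0 hGm hGl, auxg_rat hG0 hGm hGl]

include hG0 in
lemma auxg_of_ge_one (hG1 : ∀ r : ℚ, 1 ≤ r → G r = G 1) {x : ℝ} (hx : 1 ≤ x) :
    auxg G x = G 1 := by
  refine le_antisymm ?_ ?_
  · obtain ⟨r, hr⟩ := exists_rat_gt x
    calc auxg G x ≤ G r := auxg_le hG0 x hr
      _ = G 1 := hG1 r (by exact_mod_cast hx.trans hr.le)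
  · refine le_ciInf fun ⟨r, hr⟩ => ?_
    rw [hG1 r (by exact_mod_cast hx.trans hr.le)]

include hG0 in
lemma auxg_of_neg (hGneg : ∀ r : ℚ, r ≤ 0 → G r = 0) {x : ℝ} (hx : x < 0) :
    auxg G x = 0 := by
  refine le_antisymm ?_ (auxg_nonneg hG0 x)
  obtain ⟨r, hr1, hr2⟩ := exists_rat_btwn hx
  calc auxg G x ≤ G r := auxg_le hG0 x hr1
    _ = 0 := hGneg r (by exact_mod_cast hr2.le)

include hG0 in
lemma auxg_tendsto_atTop (hG1 : ∀ r : ℚ, 1 ≤ r → G r = G 1) :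
    Tendsto (auxg G) atTop (nhds (G 1)) := by
  refine Tendsto.congr' ?_ tendsto_const_nhds
  filter_upwards [eventually_ge_atTop (1:ℝ)] with x hx
  exact (auxg_of_ge_one hG0 hG1 hx).symm

include hG0 in
lemma auxg_tendsto_atBot (hGneg : ∀ r : ℚ, r ≤ 0 → G r = 0) :
    Tendsto (auxg G) atBot (nhds 0) := by
  refine Tendsto.congr' ?_ tendsto_const_nhds
  filter_upwards [eventually_le_atBot (-1:ℝ)] with x hx
  exact (auxg_of_neg hG0 hGneg (by linarith)).symm

instance aux_locfin_add {μ ν : Measure ℝ} [IsLocallyFiniteMeasure μ]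
    [IsLocallyFiniteMeasure ν] : IsLocallyFiniteMeasure (μ + ν) :=
  ⟨fun x => by
    obtain ⟨s, hs, hμ⟩ := μ.finiteAt_nhds x
    obtain ⟨t, ht, hν⟩ := ν.finiteAt_nhds x
    refine ⟨s ∩ t, Filter.inter_mem hs ht, ?_⟩
    rw [Measure.add_apply]
    exact ENNReal.add_lt_top.2 ⟨lt_of_le_of_lt (measure_mono inter_subset_left) hμ,
      lt_of_le_of_lt (measure_mono inter_subset_right) hν⟩⟩

lemma auxSt_add_compl :
    (auxSt hG0 hGm hGl).measure + (auxStC hG0 hGm hGl).measure = volume := by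
  refine Real.measure_ext_Ioo_rat fun a b => ?_
  rcases le_or_gt b a with hba | hab
  · rw [Set.Ioo_eq_empty (by exact_mod_cast hba.not_gt)]
    simp
  · have hab' : (a:ℝ) ≤ (b:ℝ) := by exact_mod_cast hab.le
    rw [Measure.add_apply, auxSt_measure_Ioo hG0 hGm hGl, StieltjesFunction.measure_Ioo,
      Real.volume_Ioo]
    have hC : Function.leftLim (fun x => x - auxg G x) ((b:ℝ))
        = (b:ℝ) - auxg G (b:ℝ) := by
      refine leftLim_eq_of_tendsto
        ?_
      exact ((continuous_id.sub (auxg_lipschitz hG0 hGm hGl).continuous).tendsto _).mono_left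
        nhdsWithin_le_nhds
    show _ + ENNReal.ofReal (Function.leftLim (fun x => x - auxg G x) ((b:ℝ)) -
      ((a:ℝ) - auxg G (a:ℝ))) = _
    rw [hC, auxg_rat hG0 hGm hGl, auxg_rat hG0 hGm hGl, ← ENNReal.ofReal_add
      (by have := hGm hab.le; linarith)
      (by have h1 := hGl a b hab.le; linarith)]
    congr 1
    ring

end gext


theorem stmt13' (q : ℕ) (ρs : ℕ → Fin q → ℝ → ℝ)
    (h : ∀ n, (∀ i, Measurable (ρs n i)) ∧ (∀ i x, ρs n i x ∈ Set.Icc (0:ℝ) 1) ∧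
      (∀ x, ∑ i, ρs n i x = 1)) :
    ∃ (φ : ℕ → ℕ) (ρ : Fin q → ℝ → ℝ), StrictMono φ ∧
      ((∀ i, Measurable (ρ i)) ∧ (∀ i x, ρ i x ∈ Set.Icc (0:ℝ) 1) ∧ (∀ x, ∑ i, ρ i x = 1)) ∧
      ∀ (i : Fin q) (a b : ℚ), 0 ≤ a → (b : ℚ) ≤ 1 →
        Tendsto (fun n => ∫ x in Set.Icc (a : ℝ) (b : ℝ), ρs (φ n) i x) atTop
          (nhds (∫ x in Set.Icc (a : ℝ) (b : ℝ), ρ i x)) := by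
  classical
  -- q is positive
  have hq : 0 < q := by
    rcases Nat.eq_zero_or_pos q with h0 | h0
    · exfalso; have := (h 0).2.2 0; subst h0; simpa using this
    · exact h0
  have hmeas : ∀ n i, Measurable (ρs n i) := fun n => (h n).1
  have hbd : ∀ n i, ∀ x, ρs n i x ∈ Set.Icc (0:ℝ) 1 := fun n => (h n).2.1
  -- the sequence of CDF-vectors
  set u : ℕ → (Fin q × ℚ → Set.Icc (0:ℝ) 1) := fun n p =>
    ⟨auxF (ρs n p.1) (p.2 : ℝ),
      ⟨auxF_nonneg (hbd n p.1) _, auxF_le_one (hmeas n p.1) (hbd n p.1) _⟩⟩ with hu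
  obtain ⟨L, -, φ, hφ, hconv⟩ :=
    IsCompact.tendsto_subseq (x := u) isCompact_univ (fun n => Set.mem_univ _)
  set G : Fin q → ℚ → ℝ := fun i r => (L (i, r) : ℝ) with hGdef
  have hG : ∀ i (r : ℚ), Tendsto (fun n => auxF (ρs (φ n) i) (r:ℝ)) atTop (nhds (G i r)) := by
    intro i r
    have h1 : Tendsto (fun n => u (φ n) (i, r)) atTop (nhds (L (i, r))) :=
      ((continuous_apply (i, r)).tendsto L).comp hconv
    exact (continuous_subtype_val.tendsto (L (i, r))).comp h1
  have hG0 : ∀ i (r : ℚ), 0 ≤ G i r := fun i r => (L (i, r)).2.1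
  have hGm : ∀ i, Monotone (G i) := by
    intro i r s hrs
    exact le_of_tendsto_of_tendsto' (hG i r) (hG i s)
      (fun n => auxF_mono (hmeas _ _) (hbd _ _) (by exact_mod_cast hrs))
  have hGl : ∀ i (r s : ℚ), r ≤ s → G i s - G i r ≤ (s:ℝ) - (r:ℝ) := by
    intro i r s hrs
    refine le_of_tendsto' ((hG i s).sub (hG i r)) fun n => ?_
    exact auxF_lip (hmeas _ _) (hbd _ _) (by exact_mod_cast hrs)
  have hG1 : ∀ i (r : ℚ), 1 ≤ r → G i r = G i 1 := by
    intro i r hr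
    refine tendsto_nhds_unique (hG i r) ?_
    refine Tendsto.congr (fun n => ?_) (hG i 1)
    rw [show ((1:ℚ):ℝ) = (1:ℝ) by norm_num]
    exact (auxF_ge_one (f := ρs (φ n) i) (x := (r:ℝ)) (by exact_mod_cast hr)).symm
  have hGneg : ∀ i (r : ℚ), r ≤ 0 → G i r = 0 := by
    intro i r hr
    refine tendsto_nhds_unique (hG i r) ?_
    refine Tendsto.congr (fun n => ?_) tendsto_const_nhds
    exact (auxF_nonpos (f := ρs (φ n) i) (x := (r:ℝ)) (by exact_mod_cast hr)).symm
  -- sum of the limit CDFs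
  have hFsum : ∀ n (x : ℝ), ∑ i, auxF (ρs n i) x = (volume (Icc (0:ℝ) 1 ∩ Iic x)).toReal := by
    intro n x
    rw [show ∑ i, auxF (ρs n i) x = ∫ t in Icc (0:ℝ) 1 ∩ Iic x, ∑ i, ρs n i t from
      (integral_finset_sum _ fun i _ =>
        aux_integrableOn (hmeas n i) (hbd n i) _ (aux_vol_ne_top x)).symm]
    simp [(h n).2.2, measureReal_def]
  have hGsum : ∀ r : ℚ, ∑ i, G i r = (volume (Icc (0:ℝ) 1 ∩ Iic (r:ℝ))).toReal := by
    intro r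
    refine tendsto_nhds_unique (tendsto_finset_sum _ fun i _ => hG i r) ?_
    refine Tendsto.congr (fun n => (hFsum (φ n) (r:ℝ)).symm) tendsto_const_nhds
  -- the limit measures
  set M : Fin q → Measure ℝ := fun i => (auxSt (hG0 i) (hGm i) (fun r s => hGl i r s)).measure
    with hM
  haveI hMfin : ∀ i, IsFiniteMeasure (M i) := by
    intro i
    constructor
    rw [StieltjesFunction.measure_univ _ (auxg_tendsto_atBot (hG0 i) (fun r => hGneg i r))
      (auxg_tendsto_atTop (hG0 i) (fun r => hG1 i r))]
    exact ENNReal.ofReal_lt_top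
  have hMle : ∀ i, M i ≤ volume := by
    intro i
    conv_rhs => rw [← auxSt_add_compl (hG0 i) (hGm i) (fun r s => hGl i r s)]
    exact Measure.le_add_right le_rfl
  have hMac : ∀ i, M i ≪ volume := fun i => Measure.absolutelyContinuous_of_le (hMle i)
  have hMIoc : ∀ i (a b : ℚ), M i (Ioc (a:ℝ) (b:ℝ)) = ENNReal.ofReal (G i b - G i a) :=
    fun i a b => auxSt_measure_Ioc _ _ _ a b
  -- the sum of the limit measures is Lebesgue on [0,1]
  have hsumM : (∑ i, M i) = volume.restrict (Icc (0:ℝ) 1) := by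
    haveI : IsFiniteMeasure (∑ i, M i) := aux_isFiniteMeasure_sum _ _
    refine Real.measure_ext_Ioo_rat fun a b => ?_
    rcases le_or_gt b a with hba | hab
    · rw [Set.Ioo_eq_empty (by exact_mod_cast hba.not_gt)]
      simp
    · have hab' : (a:ℝ) ≤ (b:ℝ) := by exact_mod_cast hab.le
      have hA : volume (Icc (0:ℝ) 1 ∩ Iic (a:ℝ)) ≠ ⊤ := aux_vol_ne_top _
      have hB : volume (Icc (0:ℝ) 1 ∩ Ioc (a:ℝ) (b:ℝ)) ≠ ⊤ :=
        ((measure_mono inter_subset_left).trans_lt (by simp [Real.volume_Icc])).ne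
      have hAB : volume (Icc (0:ℝ) 1 ∩ Iic (b:ℝ))
          = volume (Icc (0:ℝ) 1 ∩ Iic (a:ℝ)) + volume (Icc (0:ℝ) 1 ∩ Ioc (a:ℝ) (b:ℝ)) := by
        rw [← measure_union ((Set.disjoint_left.2 fun t (ht : t ∈ Iic (a:ℝ))
            (ht' : t ∈ Ioc (a:ℝ) (b:ℝ)) => ht'.1.not_ge ht).mono
            inter_subset_right inter_subset_right)
          (measurableSet_Icc.inter measurableSet_Ioc)]
        rw [← inter_union_distrib_left, Iic_union_Ioc_eq_Iic hab']
      have hBIoo : volume (Ioo (a:ℝ) (b:ℝ) ∩ Icc (0:ℝ) 1)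
          = volume (Icc (0:ℝ) 1 ∩ Ioc (a:ℝ) (b:ℝ)) := by
        rw [inter_comm]
        refine le_antisymm (measure_mono (inter_subset_inter_right _ Ioo_subset_Ioc_self)) ?_
        have hsub : Icc (0:ℝ) 1 ∩ Ioc (a:ℝ) (b:ℝ)
            ⊆ (Icc (0:ℝ) 1 ∩ Ioo (a:ℝ) (b:ℝ)) ∪ {(b:ℝ)} := by
          intro x hx
          rcases eq_or_lt_of_le hx.2.2 with hxb | hxb
          · exact Or.inr hxb
          · exact Or.inl ⟨hx.1, hx.2.1, hxb⟩
        refine (measure_mono hsub).trans ((measure_union_le _ _).trans ?_)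
        simp [Real.volume_singleton]
      rw [Measure.finset_sum_apply]
      have hptwise : ∀ i : Fin q, (M i) (Ioo (a:ℝ) (b:ℝ)) = ENNReal.ofReal (G i b - G i a) :=
        fun i => auxSt_measure_Ioo _ _ _ a b
      rw [Finset.sum_congr rfl fun i _ => hptwise i,
        ← ENNReal.ofReal_sum_of_nonneg (fun i _ => sub_nonneg.2 (hGm i hab.le)),
        Finset.sum_sub_distrib, hGsum a, hGsum b,
        Measure.restrict_apply measurableSet_Ioo, hBIoo, hAB,
        ENNReal.toReal_add hA hB]
      rw [show (volume (Icc (0:ℝ) 1 ∩ Iic (a:ℝ))).toReal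
          + (volume (Icc (0:ℝ) 1 ∩ Ioc (a:ℝ) (b:ℝ))).toReal
          - (volume (Icc (0:ℝ) 1 ∩ Iic (a:ℝ))).toReal
          = (volume (Icc (0:ℝ) 1 ∩ Ioc (a:ℝ) (b:ℝ))).toReal by ring]
      exact ENNReal.ofReal_toReal hB
  -- almost everywhere on [0,1] the densities sum to 1
  have aeSum : ∀ᵐ x, x ∈ Icc (0:ℝ) 1 → ∑ i, (M i).rnDeriv volume x = 1 := by
    have h1 := aux_rnDeriv_sum (Finset.univ) M volume
    have h3 := Measure.rnDeriv_restrict_self volume (measurableSet_Icc (a := (0:ℝ)) (b := 1))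
    rw [← hsumM] at h3
    filter_upwards [h1, h3] with x hx1 hx3 hxS
    rw [← hx1, hx3, Set.indicator_of_mem hxS, Pi.one_apply]
  set T : Set ℝ := {x | ∑ i, (M i).rnDeriv volume x = 1} with hT
  have hTmeas : MeasurableSet T :=
    (Finset.measurable_sum Finset.univ fun i _ => Measure.measurable_rnDeriv _ _)
      (measurableSet_singleton 1)
  set i0 : Fin q := ⟨0, hq⟩ with hi0
  set ρ : Fin q → ℝ → ℝ := fun i x =>
    if x ∈ T then ((M i).rnDeriv volume x).toReal else if i = i0 then 1 else 0 with hρ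
  have hd_le_one : ∀ i x, x ∈ T → (M i).rnDeriv volume x ≤ 1 := by
    intro i x hx
    calc (M i).rnDeriv volume x ≤ ∑ j, (M j).rnDeriv volume x :=
          Finset.single_le_sum (f := fun j => (M j).rnDeriv volume x)
            (fun j _ => by simp) (Finset.mem_univ i)
      _ = 1 := hx
  refine ⟨φ, ρ, hφ, ⟨?_, ?_, ?_⟩, ?_⟩
  · -- measurability
    intro i
    exact Measurable.ite hTmeas
      (Measure.measurable_rnDeriv _ _).ennreal_toReal measurable_const
  · -- range in [0,1]
    intro i x
    rw [hρ]
    by_cases hx : x ∈ T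
    · simp only [if_pos hx]
      constructor
      · exact ENNReal.toReal_nonneg
      · have := ENNReal.toReal_mono (by simp) (hd_le_one i x hx)
        simpa using this
    · simp only [if_neg hx]
      by_cases hi : i = i0 <;> simp [hi]
  · -- sums to one
    intro x
    by_cases hx : x ∈ T
    · have hne : ∀ i : Fin q, (M i).rnDeriv volume x ≠ ⊤ :=
        fun i => ((hd_le_one i x hx).trans_lt ENNReal.one_lt_top).ne
      have : ∑ i, ρ i x = ((∑ i, (M i).rnDeriv volume x)).toReal := by
        rw [ENNReal.toReal_sum (fun i _ => hne i)]
        refine Finset.sum_congr rfl fun i _ => ?_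
        rw [hρ]; simp only [if_pos hx]
      rw [this, hx]
      simp
    · have : ∀ i : Fin q, ρ i x = if i = i0 then 1 else 0 := by
        intro i; rw [hρ]; simp only [if_neg hx]
      rw [Finset.sum_congr rfl fun i _ => this i]
      simp
  · -- the convergence statement
    intro i a b ha hb1
    rcases le_or_gt a b with hab | hab
    · have hab' : (a:ℝ) ≤ (b:ℝ) := by exact_mod_cast hab
      have ha' : (0:ℝ) ≤ (a:ℝ) := by exact_mod_cast ha
      have hb1' : (b:ℝ) ≤ 1 := by exact_mod_cast hb1
      have key : ∫ x in Icc (a:ℝ) (b:ℝ), ρ i x = G i b - G i a := by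
        rw [MeasureTheory.integral_Icc_eq_integral_Ioc]
        have hsub : Ioc (a:ℝ) (b:ℝ) ⊆ Icc (0:ℝ) 1 :=
          fun x hx => ⟨ha'.trans hx.1.le, hx.2.trans hb1'⟩
        have congr1 : ∫ x in Ioc (a:ℝ) (b:ℝ), ρ i x
            = ∫ x in Ioc (a:ℝ) (b:ℝ), ((M i).rnDeriv volume x).toReal := by
          refine setIntegral_congr_ae measurableSet_Ioc ?_
          filter_upwards [aeSum] with x hx hxIoc
          have hxT : x ∈ T := hx (hsub hxIoc)
          rw [hρ]; simp only [if_pos hxT]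
        rw [congr1, integral_toReal ((Measure.measurable_rnDeriv _ _).aemeasurable.restrict)
          (ae_restrict_of_ae (Measure.rnDeriv_lt_top (M i) volume)),
          Measure.setLIntegral_rnDeriv (hMac i), hMIoc i a b,
          ENNReal.toReal_ofReal (sub_nonneg.2 (hGm i hab))]
      rw [key]
      have h1 : ∀ n, ∫ x in Icc (a:ℝ) (b:ℝ), ρs (φ n) i x
          = auxF (ρs (φ n) i) (b:ℝ) - auxF (ρs (φ n) i) (a:ℝ) :=
        fun n => auxF_interval (hmeas _ _) (hbd _ _) ha' hab' hb1'
      exact Tendsto.congr (fun n => (h1 n).symm) ((hG i b).sub (hG i a))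
    · have : Icc (a:ℝ) (b:ℝ) = ∅ := Set.Icc_eq_empty (by exact_mod_cast hab.not_ge)
      rw [this]
      simp only [Measure.restrict_empty, integral_zero_measure]
      exact tendsto_const_nhds


end Aux

/-- A fractional `q`-partition of `[0,1]`. -/
def IsFracPartition (q : ℕ) (ρ : Fin q → ℝ → ℝ) : Prop :=
  (∀ i, Measurable (ρ i)) ∧ (∀ i x, ρ i x ∈ Set.Icc (0:ℝ) 1) ∧
    (∀ x, ∑ i, ρ i x = 1)

/-- Every sequence of fractional `q`-partitions contains a subsequence converging
over rational intervals to some fractional `q`-partition. -/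
theorem stmt13 (q : ℕ) (ρs : ℕ → Fin q → ℝ → ℝ)
    (h : ∀ n, IsFracPartition q (ρs n)) :
    ∃ (φ : ℕ → ℕ) (ρ : Fin q → ℝ → ℝ), StrictMono φ ∧ IsFracPartition q ρ ∧
      ∀ (i : Fin q) (a b : ℚ), 0 ≤ a → (b : ℚ) ≤ 1 →
        Tendsto (fun n => ∫ x in Set.Icc (a : ℝ) (b : ℝ), ρs (φ n) i x) atTop
          (nhds (∫ x in Set.Icc (a : ℝ) (b : ℝ), ρ i x)) := by
  exact stmt13' q ρs h
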